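/- arXiv:1110.1142 — 3 statements merged into one kernel-verified Lean document; each statement's English description precedes it below -/
import Mathlib

section
/- For q squarefree and k ∈ ℤ, Σ(q) = Σ_{a mod q, gcd(a,q)=1} e(-ak/q) Σ_{r mod q} e(-ar³/q) satisfies Σ(q) = q · Π_{p|q} (n_{k,p} - 1), where n_{k,p} is the number of r ∈ ℤ/pℤ with r³ + k ≡ 0 (mod p). In particular Σ(q) = 0 unless every prime divisor of q is ≡ 1 (mod 3). -/
open Finset

/-- `e(w) = exp(2πiw)`. -/
noncomputable def eC (w : ℝ) : ℂ := Complex.exp (2 * Real.pi * Complex.I * w)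

/-- `Σ(q) = Σ_{a mod q, gcd(a,q)=1} e(-ak/q) · Σ_{r mod q} e(-ar³/q)`. -/
noncomputable def SigmaSum (q : ℕ) (k : ℤ) : ℂ :=
  ∑ a ∈ (Finset.range q).filter (fun a => Nat.Coprime a q),
    eC (-((a : ℝ) * (k : ℝ)) / q) * ∑ r ∈ Finset.range q, eC (-((a : ℝ) * (r : ℝ) ^ 3) / q)

/-- the number of solutions `r ∈ ℤ/pℤ` to `r³ + k ≡ 0 (mod p)`. -/
noncomputable def nSol (k : ℤ) (p : ℕ) : ℕ :=
  {r : ZMod p | r ^ 3 = -(k : ZMod p)}.ncard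

lemma eC_add (x y : ℝ) : eC (x + y) = eC x * eC y := by
  simp [eC, mul_add, Complex.exp_add]

lemma eC_zero : eC 0 = 1 := by simp [eC]

lemma eC_int (n : ℤ) : eC n = 1 := by
  simp only [eC]
  rw [show (2 * Real.pi * Complex.I * (n:ℝ) : ℂ) = (n:ℤ) * (2 * Real.pi * Complex.I) by push_cast; ring]
  exact Complex.exp_int_mul_two_pi_mul_I n

lemma eC_eq_one_iff (x : ℝ) : eC x = 1 ↔ ∃ n : ℤ, x = n := by
  constructor
  · intro h
    rw [eC, Complex.exp_eq_one_iff] at h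
    obtain ⟨n, hn⟩ := h
    refine ⟨n, ?_⟩
    have hpi : (2 * Real.pi * Complex.I : ℂ) ≠ 0 := by
      have : (Real.pi : ℂ) ≠ 0 := by exact_mod_cast Real.pi_ne_zero
      simp [this, Complex.I_ne_zero]
    have hx : (x : ℂ) = n := by
      apply mul_left_cancel₀ hpi
      rw [hn]; ring
    exact_mod_cast hx
  · rintro ⟨n, rfl⟩; exact eC_int n

noncomputable def Ech (q : ℕ) (x : ZMod q) : ℂ := eC (-(x.val : ℝ) / q)

lemma Ech_intCast (q : ℕ) [NeZero q] (n : ℤ) : Ech q (n : ZMod q) = eC (-(n : ℝ) / q) := by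
  have hq : (q : ℝ) ≠ 0 := Nat.cast_ne_zero.mpr (NeZero.ne q)
  have hv : ((((n : ZMod q)).val : ℤ)) = n % q := ZMod.val_intCast n
  rw [Ech]
  have : (-(((n : ZMod q)).val : ℝ) / q) = -(n:ℝ)/q + (n / q : ℤ) := by
    have hvr : (((n : ZMod q)).val : ℝ) = ((n % q : ℤ) : ℝ) := by exact_mod_cast congrArg (Int.cast : ℤ → ℝ) hv
    rw [hvr]
    have h0 : (n % q : ℤ) = n - q * (n / q) := by
      rw [Int.emod_def]
    rw [h0]
    push_cast
    field_simp
    ring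
  rw [this, eC_add, eC_int, mul_one]

lemma Ech_zero (q : ℕ) : Ech q 0 = 1 := by
  simp [Ech, ZMod.val_zero, eC_zero]

lemma zmod_eq_intCast {q : ℕ} [NeZero q] (x : ZMod q) : x = ((x.val : ℤ) : ZMod q) := by
  push_cast
  exact (ZMod.natCast_rightInverse x).symm

lemma Ech_add (q : ℕ) [NeZero q] (x y : ZMod q) : Ech q (x + y) = Ech q x * Ech q y := by
  rw [zmod_eq_intCast x, zmod_eq_intCast y, ← Int.cast_add, Ech_intCast, Ech_intCast, Ech_intCast]
  rw [← eC_add]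
  congr 1
  push_cast
  ring

lemma Ech_ne_one {q : ℕ} [NeZero q] {c : ZMod q} (hc : c ≠ 0) : Ech q c ≠ 1 := by
  intro h
  rw [Ech, eC_eq_one_iff] at h
  obtain ⟨n, hn⟩ := h
  have hq : 0 < (q:ℝ) := by exact_mod_cast Nat.pos_of_ne_zero (NeZero.ne q)
  have h1 : 0 < c.val := Nat.pos_of_ne_zero (fun h0 => hc (by
    rw [zmod_eq_intCast c, h0]; simp))
  have h2 : c.val < q := ZMod.val_lt c
  have hlt : -1 < (n:ℝ) := by
    rw [← hn]
    rw [neg_div, neg_lt_neg_iff, div_lt_one hq]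
    exact_mod_cast h2
  have hlt2 : (n:ℝ) < 0 := by
    rw [← hn]
    rw [neg_div, neg_lt_zero]
    positivity
  have : (-1 : ℤ) < n := by exact_mod_cast hlt
  have : n < 0 := by exact_mod_cast hlt2
  omega

lemma sum_Ech_mul (q : ℕ) [NeZero q] (c : ZMod q) :
    ∑ a : ZMod q, Ech q (a * c) = if c = 0 then (q : ℂ) else 0 := by
  split_ifs with h
  · subst h
    simp [Ech_zero, ZMod.card]
  · have key : ∑ a : ZMod q, Ech q (a * c) = Ech q c * ∑ a : ZMod q, Ech q (a * c) := by
      rw [Finset.mul_sum]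
      rw [← Equiv.sum_comp (Equiv.addRight (1 : ZMod q)) (fun a => Ech q (a * c))]
      apply Finset.sum_congr rfl
      intro a _
      simp only [Equiv.coe_addRight]
      rw [add_mul, one_mul, Ech_add, mul_comm]
    have hne : Ech q c - 1 ≠ 0 := sub_ne_zero.mpr (Ech_ne_one h)
    have h0 : (Ech q c - 1) * (∑ a : ZMod q, Ech q (a * c)) = 0 := by
      rw [sub_mul, one_mul, ← key, sub_self]
    rcases mul_eq_zero.mp h0 with h1 | h1
    · exact absurd h1 hne
    · exact h1

noncomputable def Fq (q : ℕ) [NeZero q] (c : ZMod q) : ℂ := ∑ a : (ZMod q)ˣ, Ech q (↑a * c)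

noncomputable def SigmaZ (q : ℕ) [NeZero q] (k : ℤ) : ℂ := ∑ r : ZMod q, Fq q ((k : ZMod q) + r ^ 3)

lemma sum_range_cast {q : ℕ} [NeZero q] (f : ZMod q → ℂ) :
    ∑ i ∈ Finset.range q, f (i : ZMod q) = ∑ x : ZMod q, f x := by
  refine Finset.sum_bij' (fun a _ => ((a : ZMod q))) (fun x _ => x.val) ?_ ?_ ?_ ?_ ?_ <;>
    intro a ha
  · exact Finset.mem_univ _
  · exact Finset.mem_range.mpr (ZMod.val_lt a)
  · exact ZMod.val_cast_of_lt (Finset.mem_range.mp ha)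
  · exact ZMod.natCast_rightInverse a
  · rfl

lemma sigmaSum_eq_sigmaZ (q : ℕ) [NeZero q] (k : ℤ) : SigmaSum q k = SigmaZ q k := by
  have hterm : ∀ a r : ℕ,
      eC (-((a : ℝ) * (k : ℝ)) / q) * eC (-((a : ℝ) * (r : ℝ) ^ 3) / q)
        = Ech q ((a : ZMod q) * ((k : ZMod q) + (r : ZMod q) ^ 3)) := by
    intro a r
    rw [← eC_add]
    have : (-((a : ℝ) * (k : ℝ)) / q + -((a : ℝ) * (r : ℝ) ^ 3) / q)
        = -(((a : ℤ) * (k + (r:ℤ) ^ 3) : ℤ) : ℝ) / q := by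
      push_cast; ring
    rw [this, ← Ech_intCast]
    push_cast
    ring_nf
  rw [SigmaSum, SigmaZ]
  have hinner : ∀ a : ℕ,
      eC (-((a : ℝ) * (k : ℝ)) / q) * ∑ r ∈ Finset.range q, eC (-((a : ℝ) * (r : ℝ) ^ 3) / q)
        = ∑ r : ZMod q, Ech q ((a : ZMod q) * ((k : ZMod q) + r ^ 3)) := by
    intro a
    rw [Finset.mul_sum, ← sum_range_cast (fun x => Ech q ((a : ZMod q) * ((k : ZMod q) + x ^ 3)))]
    exact Finset.sum_congr rfl fun r _ => hterm a r
  calc ∑ a ∈ (Finset.range q).filter (fun a => Nat.Coprime a q),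
        eC (-((a : ℝ) * (k : ℝ)) / q) * ∑ r ∈ Finset.range q, eC (-((a : ℝ) * (r : ℝ) ^ 3) / q)
      = ∑ a ∈ (Finset.range q).filter (fun a => Nat.Coprime a q),
          ∑ r : ZMod q, Ech q ((a : ZMod q) * ((k : ZMod q) + r ^ 3)) :=
        Finset.sum_congr rfl fun a _ => hinner a
    _ = ∑ u : (ZMod q)ˣ, ∑ r : ZMod q, Ech q ((u : ZMod q) * ((k : ZMod q) + r ^ 3)) := by
        refine Finset.sum_bij' (fun a ha => ZMod.unitOfCoprime a (Finset.mem_filter.mp ha).2)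
          (fun u _ => (u : ZMod q).val) ?_ ?_ ?_ ?_ ?_ <;> intro a ha
        · exact Finset.mem_univ _
        · refine Finset.mem_filter.mpr ⟨Finset.mem_range.mpr (ZMod.val_lt _), ?_⟩
          rw [← ZMod.isUnit_iff_coprime]
          rw [ZMod.natCast_rightInverse]
          exact a.isUnit
        · have := (Finset.mem_filter.mp ha).1
          simp [ZMod.coe_unitOfCoprime, ZMod.val_cast_of_lt (Finset.mem_range.mp this)]
        · ext
          simp [ZMod.coe_unitOfCoprime, ZMod.natCast_rightInverse _]
        · simp [ZMod.coe_unitOfCoprime]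
    _ = ∑ r : ZMod q, Fq q ((k : ZMod q) + r ^ 3) := by
        rw [Finset.sum_comm]
        simp only [Fq]

lemma Fq_eq (q : ℕ) [NeZero q] (c : ZMod q) :
    Fq q c = ∑ a ∈ Finset.univ.filter (fun a : ZMod q => IsUnit a), Ech q (a * c) := by
  refine Finset.sum_bij' (fun (u : (ZMod q)ˣ) _ => (u : ZMod q))
    (fun a ha => ((Finset.mem_filter.mp ha).2).unit) ?_ ?_ ?_ ?_ ?_ <;> intro a ha
  · exact Finset.mem_filter.mpr ⟨Finset.mem_univ _, a.isUnit⟩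
  · exact Finset.mem_univ _
  · ext; simp
  · simp
  · rfl

lemma Fq_prime (p : ℕ) [NeZero p] (hp : p.Prime) (c : ZMod p) :
    Fq p c = (if c = 0 then (p : ℂ) else 0) - 1 := by
  haveI : Fact p.Prime := ⟨hp⟩
  rw [Fq_eq]
  have hfil : Finset.univ.filter (fun a : ZMod p => IsUnit a) = Finset.univ.erase 0 := by
    ext a
    simp [isUnit_iff_ne_zero, Finset.mem_erase, and_comm]
  rw [hfil]
  have := Finset.add_sum_erase Finset.univ (fun a : ZMod p => Ech p (a * c)) (Finset.mem_univ 0)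
  have h0 : Ech p ((0 : ZMod p) * c) = 1 := by rw [zero_mul, Ech_zero]
  have hsum := sum_Ech_mul p c
  rw [h0] at this
  rw [eq_sub_of_add_eq' this, hsum]

lemma nSol_eq_card (k : ℤ) (p : ℕ) [NeZero p] :
    nSol k p = (Finset.univ.filter (fun r : ZMod p => r ^ 3 = -(k : ZMod p))).card := by
  classical
  rw [nSol, Set.ncard_eq_toFinset_card', Set.toFinset_setOf]

lemma sigmaZ_prime (p : ℕ) [NeZero p] (hp : p.Prime) (k : ℤ) :
    SigmaZ p k = (p : ℂ) * ((nSol k p : ℂ) - 1) := by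
  classical
  rw [SigmaZ]
  have h1 : ∀ r : ZMod p, Fq p ((k : ZMod p) + r ^ 3)
      = (if r ^ 3 = -(k : ZMod p) then (p : ℂ) else 0) - 1 := by
    intro r
    rw [Fq_prime p hp]
    congr 1
    have : ((k : ZMod p) + r ^ 3 = 0) ↔ (r ^ 3 = -(k : ZMod p)) := by
      constructor <;> intro h <;> linear_combination h
    simp [this]
  simp_rw [h1]
  rw [Finset.sum_sub_distrib, ← Finset.sum_filter, Finset.sum_const, Finset.sum_const]
  rw [Finset.card_univ, ZMod.card, ← nSol_eq_card]
  simp only [nsmul_eq_mul, mul_one]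
  ring

section CRT
variable (u v : ℕ) [NeZero u] [NeZero v] (h : Nat.Coprime u v)

lemma Ech_crt (x : ZMod (u * v)) :
    haveI : NeZero (u * v) := ⟨mul_ne_zero (NeZero.ne u) (NeZero.ne v)⟩
    Ech (u * v) x
      = Ech u ((Nat.gcdB u v : ZMod u) * (ZMod.chineseRemainder h x).1)
        * Ech v ((Nat.gcdA u v : ZMod v) * (ZMod.chineseRemainder h x).2) := by
  haveI : NeZero (u * v) := ⟨mul_ne_zero (NeZero.ne u) (NeZero.ne v)⟩
  set S : ℤ := Nat.gcdA u v
  set T : ℤ := Nat.gcdB u v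
  have hbez : (u : ℤ) * S + (v : ℤ) * T = 1 := by
    have := Nat.gcd_eq_gcd_ab u v
    rw [h] at this
    push_cast at this
    linarith
  set n : ℤ := (x.val : ℤ) with hn
  have hx : x = (n : ZMod (u * v)) := zmod_eq_intCast x
  have hφ1 : ((ZMod.chineseRemainder h x).1) = ((n : ZMod u)) := by
    rw [hx, map_intCast]
    rfl
  have hφ2 : ((ZMod.chineseRemainder h x).2) = ((n : ZMod v)) := by
    rw [hx, map_intCast]
    rfl
  rw [hφ1, hφ2, hx, Ech_intCast]
  rw [show (T : ZMod u) * ((n : ZMod u)) = ((T * n : ℤ) : ZMod u) by push_cast; ring]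
  rw [show (S : ZMod v) * ((n : ZMod v)) = ((S * n : ℤ) : ZMod v) by push_cast; ring]
  rw [Ech_intCast, Ech_intCast, ← eC_add]
  congr 1
  have hu : (u : ℝ) ≠ 0 := Nat.cast_ne_zero.mpr (NeZero.ne u)
  have hv : (v : ℝ) ≠ 0 := Nat.cast_ne_zero.mpr (NeZero.ne v)
  have hbezR : (u : ℝ) * (S : ℝ) + (v : ℝ) * (T : ℝ) = 1 := by exact_mod_cast hbez
  push_cast
  rw [div_add_div _ _ hu hv]
  rw [div_eq_div_iff (by positivity) (by positivity : (u:ℝ)*v ≠ 0)]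
  linear_combination ((n : ℝ) * (u:ℝ) * (v:ℝ)) * hbezR

end CRT

section CRT2
variable (u v : ℕ) [NeZero u] [NeZero v] (h : Nat.Coprime u v)

lemma Fq_crt (c : ZMod (u * v)) :
    haveI : NeZero (u * v) := ⟨mul_ne_zero (NeZero.ne u) (NeZero.ne v)⟩
    Fq (u * v) c = Fq u (ZMod.chineseRemainder h c).1 * Fq v (ZMod.chineseRemainder h c).2 := by
  haveI : NeZero (u * v) := ⟨mul_ne_zero (NeZero.ne u) (NeZero.ne v)⟩
  set S : ℤ := Nat.gcdA u v
  set T : ℤ := Nat.gcdB u v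
  have hbez : (u : ℤ) * S + (v : ℤ) * T = 1 := by
    have := Nat.gcd_eq_gcd_ab u v
    rw [h] at this
    push_cast at this
    linarith
  have hTu : (T : ZMod u) * (v : ZMod u) = 1 := by
    have : (((u : ℤ) * S + (v : ℤ) * T : ℤ) : ZMod u) = ((1 : ℤ) : ZMod u) := by rw [hbez]
    push_cast at this
    rw [ZMod.natCast_self] at this
    rw [mul_comm]
    simpa using this
  have hSv : (S : ZMod v) * (u : ZMod v) = 1 := by
    have : (((u : ℤ) * S + (v : ℤ) * T : ℤ) : ZMod v) = ((1 : ℤ) : ZMod v) := by rw [hbez]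
    push_cast at this
    rw [ZMod.natCast_self] at this
    rw [mul_comm]
    simpa using this
  set Tu : (ZMod u)ˣ := (IsUnit.of_mul_eq_one _ hTu).unit
  set Sv : (ZMod v)ˣ := (IsUnit.of_mul_eq_one _ hSv).unit
  have hTu' : (Tu : ZMod u) = (T : ZMod u) := rfl
  have hSv' : (Sv : ZMod v) = (S : ZMod v) := rfl
  set φ := ZMod.chineseRemainder h
  set ε : (ZMod (u * v))ˣ ≃* (ZMod u)ˣ × (ZMod v)ˣ :=
    (Units.mapEquiv φ.toMulEquiv).trans MulEquiv.prodUnits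
  have hε1 : ∀ a : (ZMod (u * v))ˣ, ((ε a).1 : ZMod u) = (φ (a : ZMod (u * v))).1 := by
    intro a; rfl
  have hε2 : ∀ a : (ZMod (u * v))ˣ, ((ε a).2 : ZMod v) = (φ (a : ZMod (u * v))).2 := by
    intro a; rfl
  rw [Fq]
  calc ∑ a : (ZMod (u * v))ˣ, Ech (u * v) ((a : ZMod (u*v)) * c)
      = ∑ a : (ZMod (u * v))ˣ,
          Ech u ((T : ZMod u) * ((φ (a : ZMod (u*v))).1 * (φ c).1))
            * Ech v ((S : ZMod v) * ((φ (a : ZMod (u*v))).2 * (φ c).2)) := by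
        refine Finset.sum_congr rfl fun a _ => ?_
        rw [Ech_crt u v h, map_mul]
        simp only [Prod.fst_mul, Prod.snd_mul]
        rfl
    _ = ∑ b : (ZMod u)ˣ × (ZMod v)ˣ,
          Ech u (((Tu * b.1 : (ZMod u)ˣ) : ZMod u) * (φ c).1)
            * Ech v (((Sv * b.2 : (ZMod v)ˣ) : ZMod v) * (φ c).2) := by
        refine Fintype.sum_equiv ε _ _ fun a => ?_
        rw [← hε1 a, ← hε2 a]
        push_cast [hTu', hSv']
        ring_nf
    _ = (∑ b1 : (ZMod u)ˣ, Ech u (((Tu * b1 : (ZMod u)ˣ) : ZMod u) * (φ c).1))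
          * (∑ b2 : (ZMod v)ˣ, Ech v (((Sv * b2 : (ZMod v)ˣ) : ZMod v) * (φ c).2)) := by
        rw [Fintype.sum_prod_type]
        exact (Finset.sum_mul_sum Finset.univ Finset.univ
          (fun b1 : (ZMod u)ˣ => Ech u (((Tu * b1 : (ZMod u)ˣ) : ZMod u) * (φ c).1))
          (fun b2 : (ZMod v)ˣ => Ech v (((Sv * b2 : (ZMod v)ˣ) : ZMod v) * (φ c).2))).symm
    _ = Fq u (φ c).1 * Fq v (φ c).2 := by
        rw [Fq, Fq]
        congr 1
        · exact Equiv.sum_comp (Equiv.mulLeft Tu) (fun b1 => Ech u ((b1 : ZMod u) * (φ c).1))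
        · exact Equiv.sum_comp (Equiv.mulLeft Sv) (fun b2 => Ech v ((b2 : ZMod v) * (φ c).2))

lemma sigmaZ_mul (h : Nat.Coprime u v) (k : ℤ) :
    haveI : NeZero (u * v) := ⟨mul_ne_zero (NeZero.ne u) (NeZero.ne v)⟩
    SigmaZ (u * v) k = SigmaZ u k * SigmaZ v k := by
  haveI : NeZero (u * v) := ⟨mul_ne_zero (NeZero.ne u) (NeZero.ne v)⟩
  set φ := ZMod.chineseRemainder h
  rw [SigmaZ]
  calc ∑ r : ZMod (u * v), Fq (u * v) ((k : ZMod (u*v)) + r ^ 3)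
      = ∑ r : ZMod (u * v),
          Fq u ((k : ZMod u) + ((φ r).1) ^ 3) * Fq v ((k : ZMod v) + ((φ r).2) ^ 3) := by
        refine Finset.sum_congr rfl fun r _ => ?_
        rw [Fq_crt u v h]
        congr 2 <;> rw [map_add, map_pow, map_intCast] <;> rfl
    _ = ∑ b : ZMod u × ZMod v, Fq u ((k : ZMod u) + b.1 ^ 3) * Fq v ((k : ZMod v) + b.2 ^ 3) := by
        exact (Fintype.sum_equiv φ.toEquiv _ _ fun r => rfl)
    _ = SigmaZ u k * SigmaZ v k := by
        rw [Fintype.sum_prod_type, SigmaZ, SigmaZ]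
        exact (Finset.sum_mul_sum Finset.univ Finset.univ
          (fun r1 : ZMod u => Fq u ((k : ZMod u) + r1 ^ 3))
          (fun r2 : ZMod v => Fq v ((k : ZMod v) + r2 ^ 3))).symm

end CRT2

noncomputable def SigmaZ' (q : ℕ) (k : ℤ) : ℂ :=
  if h : q = 0 then 0 else
    haveI : NeZero q := ⟨h⟩
    SigmaZ q k

lemma SigmaZ'_eq (q : ℕ) [NeZero q] (k : ℤ) : SigmaZ' q k = SigmaZ q k := by
  rw [SigmaZ', dif_neg (NeZero.ne q)]

lemma SigmaZ'_one (k : ℤ) : SigmaZ' 1 k = 1 := by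
  rw [SigmaZ'_eq, SigmaZ]
  have h1 : ∀ x : ZMod 1, Fq 1 x = 1 := by
    intro x
    rw [Fq]
    have h2 : ∀ a : (ZMod 1)ˣ, Ech 1 ((a : ZMod 1) * x) = 1 := by
      intro a
      have : ((a : ZMod 1) * x) = 0 := Subsingleton.elim _ _
      rw [this, Ech]
      simp [ZMod.val_zero, eC]
    simp only [h2, Finset.sum_const, Finset.card_univ]
    norm_num
  simp only [h1, Finset.sum_const, Finset.card_univ]
  norm_num

lemma SigmaZ'_mul (u v : ℕ) (hu : u ≠ 0) (hv : v ≠ 0) (h : Nat.Coprime u v) (k : ℤ) :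
    SigmaZ' (u * v) k = SigmaZ' u k * SigmaZ' v k := by
  haveI : NeZero u := ⟨hu⟩
  haveI : NeZero v := ⟨hv⟩
  haveI : NeZero (u * v) := ⟨mul_ne_zero hu hv⟩
  rw [SigmaZ'_eq, SigmaZ'_eq, SigmaZ'_eq]
  exact sigmaZ_mul u v h k

lemma SigmaZ'_prime (p : ℕ) (hp : p.Prime) (k : ℤ) :
    SigmaZ' p k = (p : ℂ) * ((nSol k p : ℂ) - 1) := by
  haveI : NeZero p := ⟨hp.ne_zero⟩
  rw [SigmaZ'_eq]
  exact sigmaZ_prime p hp k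

lemma SigmaZ'_squarefree (k : ℤ) (q : ℕ) (hq : Squarefree q) :
    SigmaZ' q k = (q : ℂ) * ∏ p ∈ q.primeFactors, ((nSol k p : ℂ) - 1) := by
  induction q using Nat.strong_induction_on with
  | _ q ih =>
  rcases eq_or_ne q 1 with rfl | hq1
  · simp [SigmaZ'_one]
  · have hq0 : q ≠ 0 := hq.ne_zero
    have hp : q.minFac.Prime := Nat.minFac_prime hq1
    obtain ⟨m, hm⟩ := Nat.minFac_dvd q
    set p := q.minFac with hp_def
    have hm0 : m ≠ 0 := by rintro rfl; rw [mul_zero] at hm; exact hq0 hm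
    have hmlt : m < q := by
      rw [hm]
      calc m = 1 * m := (one_mul m).symm
        _ < p * m := by
          have := hp.one_lt
          have := Nat.pos_of_ne_zero hm0
          exact Nat.mul_lt_mul_of_lt_of_le hp.one_lt (le_refl m) this
    have hnotdvd : ¬ p ∣ m := by
      intro hd
      exact hp.not_isUnit (hq p (by rw [hm]; exact mul_dvd_mul_left p hd))
    have hcop : Nat.Coprime p m := (hp.coprime_iff_not_dvd).mpr hnotdvd
    have hsq_m : Squarefree m := hq.squarefree_of_dvd (Dvd.intro_left p hm.symm)
    have hpf : (p * m).primeFactors = insert p m.primeFactors := by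
      rw [Nat.primeFactors_mul hp.ne_zero hm0, Nat.Prime.primeFactors hp]
      ext x
      simp [or_comm]
    have hpnotmem : p ∉ m.primeFactors := by
      intro hmem
      exact hnotdvd (Nat.dvd_of_mem_primeFactors hmem)
    rw [hm, SigmaZ'_mul p m hp.ne_zero hm0 hcop k, SigmaZ'_prime p hp k,
      ih m hmlt hsq_m, hpf, Finset.prod_insert hpnotmem]
    push_cast
    ring

lemma cube_bijective_of_mod_three (p : ℕ) (hp : p.Prime) (h3 : p % 3 ≠ 1) :
    Function.Bijective (fun x : ZMod p => x ^ 3) := by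
  haveI : Fact p.Prime := ⟨hp⟩
  have hcase : p % 3 = 0 ∨ p % 3 = 2 := by omega
  rcases hcase with h0 | h2
  · -- p = 3
    have hdvd : 3 ∣ p := Nat.dvd_of_mod_eq_zero h0
    have hp3 : p = 3 := ((Nat.prime_dvd_prime_iff_eq Nat.prime_three hp).mp hdvd).symm
    subst hp3
    have : (fun x : ZMod 3 => x ^ 3) = id := by
      funext x
      exact ZMod.pow_card x
    rw [this]
    exact Function.bijective_id
  · -- p ≡ 2 mod 3 : cube map injective
    have hne3 : ¬ (3 : ℕ) ∣ (p - 1) := by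
      intro hd
      have hp2 : 2 ≤ p := hp.two_le
      omega
    have hcop : Nat.Coprime 3 (p - 1) := (Nat.prime_three.coprime_iff_not_dvd).mpr hne3
    set a : ℤ := Nat.gcdA 3 (p - 1)
    set b : ℤ := Nat.gcdB 3 (p - 1)
    have hbez : 3 * a + ((p - 1 : ℕ) : ℤ) * b = 1 := by
      have := Nat.gcd_eq_gcd_ab 3 (p - 1)
      rw [hcop] at this
      push_cast at this
      linarith
    have hz : ∀ z : ZMod p, z ≠ 0 → z = (z ^ 3) ^ a := by
      intro z hz0
      have h1 : z ^ (((p - 1 : ℕ) : ℤ)) = 1 := by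
        rw [zpow_natCast, ZMod.pow_card_sub_one_eq_one hz0]
      calc z = z ^ (1 : ℤ) := (zpow_one z).symm
        _ = z ^ (3 * a + ((p - 1 : ℕ) : ℤ) * b) := by rw [hbez]
        _ = (z ^ (3 : ℤ)) ^ a * (z ^ (((p - 1 : ℕ) : ℤ))) ^ b := by
            rw [zpow_add₀ hz0, zpow_mul, zpow_mul]
        _ = (z ^ 3) ^ a := by
            rw [h1, one_zpow, mul_one]
            rw [show (3:ℤ) = ((3:ℕ):ℤ) from rfl, zpow_natCast]
    have hinj : Function.Injective (fun x : ZMod p => x ^ 3) := by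
      intro x y hxy
      simp only at hxy
      rcases eq_or_ne x 0 with rfl | hx0
      · rcases eq_or_ne y 0 with rfl | hy0
        · rfl
        · exfalso
          apply hy0
          have : y ^ 3 = 0 := by rw [← hxy]; simp
          exact pow_eq_zero_iff (by norm_num) |>.mp this
      · rcases eq_or_ne y 0 with rfl | hy0
        · exfalso
          apply hx0
          have : x ^ 3 = 0 := by rw [hxy]; simp
          exact pow_eq_zero_iff (by norm_num) |>.mp this
        · rw [hz x hx0, hz y hy0, hxy]
    exact Finite.injective_iff_bijective.mp hinj

lemma nSol_eq_one (p : ℕ) (hp : p.Prime) (h3 : p % 3 ≠ 1) (k : ℤ) : nSol k p = 1 := by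
  have hbij := cube_bijective_of_mod_three p hp h3
  obtain ⟨r0, hr0⟩ := hbij.surjective (-(k : ZMod p))
  rw [nSol]
  have hset : {r : ZMod p | r ^ 3 = -(k : ZMod p)} = {r0} := by
    ext r
    simp only [Set.mem_setOf_eq, Set.mem_singleton_iff]
    constructor
    · intro hr
      exact hbij.injective (hr.trans hr0.symm)
    · rintro rfl
      exact hr0
  rw [hset, Set.ncard_singleton]

theorem SigmaSum_squarefree_eval (q : ℕ) (hq : Squarefree q) (k : ℤ) :
    SigmaSum q k = (q : ℂ) * ∏ p ∈ q.primeFactors, ((nSol k p : ℂ) - 1) ∧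
    ((¬ ∀ p ∈ q.primeFactors, p % 3 = 1) → SigmaSum q k = 0) := by
  have hq0 : q ≠ 0 := hq.ne_zero
  haveI : NeZero q := ⟨hq0⟩
  have hmain : SigmaSum q k = (q : ℂ) * ∏ p ∈ q.primeFactors, ((nSol k p : ℂ) - 1) := by
    rw [sigmaSum_eq_sigmaZ q k, ← SigmaZ'_eq, SigmaZ'_squarefree k q hq]
  refine ⟨hmain, ?_⟩
  intro hnot
  push_neg at hnot
  obtain ⟨p, hpmem, hp3⟩ := hnot
  have hp : p.Prime := Nat.prime_of_mem_primeFactors hpmem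
  have hzero : ((nSol k p : ℂ) - 1) = 0 := by
    rw [nSol_eq_one p hp hp3 k]
    norm_num
  rw [hmain, Finset.prod_eq_zero hpmem hzero, mul_zero]
end

section
/- (Pólya–Vinogradov with explicit constant) For any non-principal Dirichlet character χ modulo q and any integers M and N ≥ 1, |Σ_{M < n ≤ M+N} χ(n)| ≤ 6 √q log q. -/
open Finset Complex ZMod Real
open scoped ZMod

noncomputable def Complex.abs : AbsoluteValue ℂ ℝ where
  toFun z := ‖z‖
  map_mul' := norm_mul
  nonneg' := norm_nonneg
  eq_zero' _ := norm_eq_zero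
  add_le' := norm_add_le

lemma Complex.abs_apply (z : ℂ) : Complex.abs z = Real.sqrt (Complex.normSq z) := Complex.norm_def z

lemma Complex.norm_eq_abs (z : ℂ) : ‖z‖ = Complex.abs z := rfl

lemma Complex.abs_exp_ofReal_mul_I (x : ℝ) : Complex.abs (Complex.exp (x * I)) = 1 :=
  Complex.norm_exp_ofReal_mul_I x

lemma Complex.abs_two : Complex.abs 2 = 2 := Complex.norm_two

lemma Complex.abs_I : Complex.abs I = 1 := Complex.norm_I

lemma Complex.abs_ofReal (x : ℝ) : Complex.abs (x : ℂ) = |x| := Complex.norm_real x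

lemma Complex.abs_natCast (n : ℕ) : Complex.abs (n : ℂ) = n := Complex.norm_natCast n

lemma Complex.abs_intCast (n : ℤ) : Complex.abs (n : ℂ) = |(n : ℝ)| := Complex.norm_intCast n

lemma Circle.abs_coe (z : Circle) : Complex.abs (z : ℂ) = 1 := Circle.norm_coe z


lemma abs_exp_I_sub_one (θ : ℝ) :
    Complex.abs (Complex.exp (θ * I) - 1) = 2 * |Real.sin (θ / 2)| := by
  have h : Complex.exp (θ * I) - 1
      = Complex.exp ((θ / 2 : ℝ) * I) * (2 * I * Complex.sin ((θ / 2 : ℝ))) := by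
    rw [Complex.sin]
    push_cast
    have h1 : Complex.exp (θ * I) = Complex.exp ((θ:ℂ)/2 * I) * Complex.exp ((θ:ℂ)/2 * I) := by
      rw [← Complex.exp_add]; ring_nf
    have h2 : Complex.exp (-((θ:ℂ)/2) * I) * Complex.exp ((θ:ℂ)/2 * I) = 1 := by
      rw [← Complex.exp_add]
      norm_num
    rw [h1]
    linear_combination h2 + (-(Complex.exp ((θ:ℂ)/2 * I) *
      (Complex.exp (-((θ:ℂ)/2) * I) - Complex.exp ((θ:ℂ)/2 * I)))) * Complex.I_sq
  rw [h]
  rw [map_mul, Complex.abs_exp_ofReal_mul_I, one_mul, map_mul, map_mul, Complex.abs_two,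
    Complex.abs_I, mul_one, ← Complex.ofReal_sin, Complex.abs_ofReal]

lemma abs_sum_zpow_Ioc (z : ℂ) (hz : Complex.abs z = 1) (h1 : z ≠ 1) (A B : ℤ) :
    Complex.abs (∑ n ∈ Finset.Ioc A B, z ^ n) ≤ 2 / Complex.abs (z - 1) := by
  have hz0 : z ≠ 0 := by rintro rfl; simp at hz
  have hd : 0 < Complex.abs (z - 1) := by
    rw [AbsoluteValue.pos_iff]; exact sub_ne_zero.mpr h1
  rcases le_or_gt B A with h | h
  · rw [Finset.Ioc_eq_empty (by omega), Finset.sum_empty, map_zero]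
    positivity
  · set L : ℕ := (B - A).toNat with hL
    have key : ∑ n ∈ Finset.Ioc A B, z ^ n = z ^ (A + 1) * ∑ j ∈ Finset.range L, z ^ j := by
      rw [Finset.mul_sum]
      refine Finset.sum_nbij' (fun n => (n - (A + 1)).toNat) (fun j => A + 1 + (j : ℤ))
        ?_ ?_ ?_ ?_ ?_
      · intro n hn; simp only [Finset.mem_Ioc] at hn; simp only [Finset.mem_range]; omega
      · intro j hj; simp only [Finset.mem_range] at hj; simp only [Finset.mem_Ioc]; omega
      · intro n hn; simp only [Finset.mem_Ioc] at hn
        show A + 1 + (((n - (A + 1)).toNat : ℕ) : ℤ) = n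
        omega
      · intro j hj; simp only [Finset.mem_range] at hj
        show ((A + 1 + (j:ℤ) - (A + 1)).toNat : ℕ) = j
        omega
      · intro n hn
        simp only [Finset.mem_Ioc] at hn
        show z ^ n = z ^ (A + 1) * z ^ (((n - (A + 1)).toNat : ℕ))
        rw [← zpow_natCast, ← zpow_add₀ hz0]
        congr 1
        omega
    rw [key, geom_sum_eq h1, map_mul]
    have h1' : Complex.abs (z ^ (A + 1)) = 1 := by
      rw [map_zpow₀, hz, one_zpow]
    rw [h1', one_mul, map_div₀]
    gcongr
    calc Complex.abs (z ^ L - 1) ≤ Complex.abs (z ^ L) + 1 := by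
          simpa using Complex.abs.sub_le_add (z ^ L) 1
      _ = 2 := by rw [map_pow, hz, one_pow]; norm_num

lemma abs_stdAddChar_eq_one {f : ℕ} [NeZero f] (x : ZMod f) : Complex.abs (ZMod.stdAddChar x) = 1 := by
  rw [ZMod.stdAddChar_apply]
  exact Circle.abs_coe _

lemma conj_stdAddChar {f : ℕ} [NeZero f] (x : ZMod f) :
    (starRingEnd ℂ) (ZMod.stdAddChar x) = ZMod.stdAddChar (-x) := by
  rw [AddChar.map_neg_eq_inv, ← Complex.inv_eq_conj (abs_stdAddChar_eq_one x)]

lemma abs_gaussSum_primitive {f : ℕ} [NeZero f] {χ : DirichletCharacter ℂ f}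
    (hχ : χ.IsPrimitive) :
    Complex.abs (gaussSum χ ZMod.stdAddChar) = Real.sqrt f := by
  set τ := gaussSum χ ZMod.stdAddChar with hτ
  have H := congrFun (ZMod.dft_dft (⇑χ)) (-1 : ZMod f)
  rw [neg_neg, map_one, smul_eq_mul, mul_one] at H
  have step : (𝓕 (𝓕 ⇑χ)) (-1 : ZMod f) = τ * (starRingEnd ℂ) τ := by
    rw [ZMod.dft_apply]
    have : ∀ j : ZMod f, ZMod.stdAddChar (-(j * (-1 : ZMod f))) • (𝓕 ⇑χ) j
        = ZMod.stdAddChar j * (χ⁻¹ (-j) * τ) := by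
      intro j
      rw [hχ.fourierTransform_eq_inv_mul_gaussSum j, smul_eq_mul, mul_neg_one, neg_neg]
    rw [Finset.sum_congr rfl fun j _ => this j]
    have reindex : ∑ j : ZMod f, ZMod.stdAddChar j * (χ⁻¹ (-j) * τ)
        = ∑ j : ZMod f, ZMod.stdAddChar (-j) * (χ⁻¹ j * τ) :=
      Fintype.sum_equiv (Equiv.neg _) _ _ (fun j => by rw [Equiv.neg_apply, neg_neg])
    rw [reindex, hτ, gaussSum, map_sum, Finset.mul_sum]
    refine Finset.sum_congr rfl fun b _ => ?_
    rw [map_mul, conj_stdAddChar, ← MulChar.star_apply' χ b, RCLike.star_def]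
    ring
  rw [step] at H
  rw [Complex.mul_conj] at H
  have : Complex.normSq τ = (f : ℝ) := by exact_mod_cast H
  rw [Complex.abs_apply, this]

lemma sin_lower (f m : ℕ) (h0 : 0 < m) (hmf : m < f) :
    2 * m * ((f:ℝ) - m) / (f:ℝ)^2 ≤ Real.sin (π * m / f) := by
  have hfpos : (0:ℝ) < f := by exact_mod_cast h0.trans hmf
  have hm0 : (0:ℝ) < m := by exact_mod_cast h0
  have hm : (m:ℝ) < f := by exact_mod_cast hmf
  rcases le_or_gt (2*m) f with h | h
  · have h1 : (0:ℝ) ≤ π * m / f := by positivity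
    have h2 : π * m / f ≤ π / 2 := by
      rw [div_le_div_iff₀ hfpos (by norm_num)]
      have : (2:ℝ) * m ≤ f := by exact_mod_cast h
      nlinarith [Real.pi_pos]
    have hs := Real.mul_le_sin h1 h2
    have hπ : (0:ℝ) < π := Real.pi_pos
    have heq : 2 / π * (π * m / f) = 2 * m / f := by field_simp
    rw [heq] at hs
    refine le_trans ?_ hs
    rw [div_le_div_iff₀ (by positivity) hfpos]
    nlinarith [mul_nonneg (sq_nonneg (m:ℝ)) hfpos.le]
  · have hsym : Real.sin (π * m / f) = Real.sin (π * ((f:ℝ) - m) / f) := by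
      rw [← Real.sin_pi_sub]
      congr 1
      field_simp
    rw [hsym]
    have h1 : (0:ℝ) ≤ π * ((f:ℝ) - m) / f := by
      apply div_nonneg _ hfpos.le
      apply mul_nonneg Real.pi_pos.le
      linarith
    have h2 : π * ((f:ℝ) - m) / f ≤ π / 2 := by
      rw [div_le_div_iff₀ hfpos (by norm_num)]
      have : (f:ℝ) < 2 * m := by exact_mod_cast h
      nlinarith [Real.pi_pos]
    have hs := Real.mul_le_sin h1 h2
    have hπ : (0:ℝ) < π := Real.pi_pos
    have heq : 2 / π * (π * ((f:ℝ) - m) / f) = 2 * ((f:ℝ) - m) / f := by field_simp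
    rw [heq] at hs
    refine le_trans ?_ hs
    rw [div_le_div_iff₀ (by positivity) hfpos]
    nlinarith [mul_nonneg (sq_nonneg ((f:ℝ) - m)) hfpos.le]

lemma harmonic_sum_Ioo (f : ℕ) (hf : 2 ≤ f) :
    ∑ m ∈ Finset.Ioo 0 f, (1:ℝ) / m ≤ 1 + Real.log f := by
  have h1 : ∑ m ∈ Finset.Ioo 0 f, (1:ℝ) / m = (harmonic (f-1) : ℝ) := by
    rw [harmonic_eq_sum_Icc]
    push_cast
    rw [show Finset.Ioo 0 f = Finset.Icc 1 (f-1) by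
      ext x; simp only [Finset.mem_Ioo, Finset.mem_Icc]; omega]
    simp [one_div]
  rw [h1]
  calc (harmonic (f-1) : ℝ) ≤ 1 + Real.log (f-1 : ℕ) := harmonic_le_one_add_log _
    _ ≤ 1 + Real.log f := by
        gcongr
        · have : (1:ℕ) ≤ f - 1 := by omega
          exact_mod_cast Nat.lt_of_lt_of_le Nat.zero_lt_one this
        · exact_mod_cast Nat.sub_le f 1

lemma inv_sin_sum (f : ℕ) (hf : 2 ≤ f) :
    ∑ m ∈ Finset.Ioo 0 f, 1 / Real.sin (π * m / f) ≤ f * (1 + Real.log f) := by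
  have hfpos : (0:ℝ) < f := by positivity
  have step1 : ∀ m ∈ Finset.Ioo 0 f,
      1 / Real.sin (π * m / f) ≤ (f:ℝ)/2 * (1/m) + (f:ℝ)/2 * (1/((f:ℝ)-m)) := by
    intro m hm
    rw [Finset.mem_Ioo] at hm
    have hm0 : (0:ℝ) < m := by exact_mod_cast hm.1
    have hmf : (m:ℝ) < f := by exact_mod_cast hm.2
    have hfm : (0:ℝ) < (f:ℝ) - m := by linarith
    have hlow := sin_lower f m hm.1 hm.2
    have hpos : (0:ℝ) < 2 * m * ((f:ℝ) - m) / (f:ℝ)^2 := by positivity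
    have hsin : 0 < Real.sin (π * m / f) := lt_of_lt_of_le hpos hlow
    have key : 1 / Real.sin (π * m / f) ≤ (f:ℝ)^2 / (2 * m * ((f:ℝ) - m)) := by
      rw [div_le_div_iff₀ hsin (by positivity), one_mul]
      have hrw : 2*m*((f:ℝ)-m) = (f:ℝ)^2 * (2*m*((f:ℝ)-m)/(f:ℝ)^2) := by field_simp
      rw [hrw]
      gcongr
    refine key.trans (le_of_eq ?_)
    field_simp
    ring
  calc ∑ m ∈ Finset.Ioo 0 f, 1 / Real.sin (π * m / f)
      ≤ ∑ m ∈ Finset.Ioo 0 f, ((f:ℝ)/2 * (1/m) + (f:ℝ)/2 * (1/((f:ℝ)-m))) :=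
        Finset.sum_le_sum step1
    _ = (f:ℝ)/2 * ∑ m ∈ Finset.Ioo 0 f, (1:ℝ)/m
        + (f:ℝ)/2 * ∑ m ∈ Finset.Ioo 0 f, (1:ℝ)/((f:ℝ)-m) := by
        rw [Finset.sum_add_distrib, Finset.mul_sum, Finset.mul_sum]
    _ = (f:ℝ)/2 * ∑ m ∈ Finset.Ioo 0 f, (1:ℝ)/m + (f:ℝ)/2 * ∑ m ∈ Finset.Ioo 0 f, (1:ℝ)/m := by
        congr 1
        congr 1
        refine Finset.sum_nbij' (fun m => f - m) (fun m => f - m) ?_ ?_ ?_ ?_ ?_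
        · intro a ha; simp only [Finset.mem_Ioo] at *; omega
        · intro a ha; simp only [Finset.mem_Ioo] at *; omega
        · intro a ha; simp only [Finset.mem_Ioo] at ha; show f - (f - a) = a; omega
        · intro a ha; simp only [Finset.mem_Ioo] at ha; show f - (f - a) = a; omega
        · intro a ha
          simp only [Finset.mem_Ioo] at ha
          show (1:ℝ)/((f:ℝ) - a) = 1/((f - a : ℕ):ℝ)
          rw [Nat.cast_sub ha.2.le]
    _ = (f:ℝ) * ∑ m ∈ Finset.Ioo 0 f, (1:ℝ)/m := by ring
    _ ≤ (f:ℝ) * (1 + Real.log f) := by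
        have := harmonic_sum_Ioo f hf
        have h2 : (0:ℝ) ≤ 1 + Real.log f := by
          have : (0:ℝ) ≤ Real.log f := Real.log_nonneg (by exact_mod_cast Nat.one_le_of_lt hf)
          linarith
        gcongr

lemma sum_moebius_divisors (g : ℕ) :
    ∑ d ∈ g.divisors, ArithmeticFunction.moebius d = if g = 1 then 1 else 0 := by
  rw [← ArithmeticFunction.coe_mul_zeta_apply, ArithmeticFunction.moebius_mul_coe_zeta,
    ArithmeticFunction.one_apply]

lemma abs_moebius_le_one (d : ℕ) : |ArithmeticFunction.moebius d| ≤ 1 := by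
  by_cases h : Squarefree d
  · rw [ArithmeticFunction.moebius_apply_of_squarefree h, _root_.abs_pow, _root_.abs_neg, _root_.abs_one, one_pow]
  · rw [ArithmeticFunction.moebius_eq_zero_of_not_squarefree h]
    norm_num

lemma card_divisors_le_two_sqrt (s : ℕ) (hs : 0 < s) :
    (s.divisors.card : ℝ) ≤ 2 * Real.sqrt s := by
  have key : s.divisors.card ≤ 2 * (Finset.Icc 1 (Nat.sqrt s)).card := by
    apply Finset.card_le_mul_card_image_of_maps_to (f := fun d => min d (s / d))
    · intro d hd
      rw [Nat.mem_divisors] at hd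
      have hd1 : 1 ≤ d := Nat.one_le_iff_ne_zero.mpr fun h => by
        subst h; exact absurd (Nat.eq_zero_of_zero_dvd hd.1) hs.ne'
      have hdvd : d ∣ s := hd.1
      have hq1 : 1 ≤ s / d := Nat.one_le_div_iff (by omega) |>.mpr (Nat.le_of_dvd hs hdvd)
      rw [Finset.mem_Icc]
      refine ⟨le_min hd1 hq1, ?_⟩
      rw [Nat.le_sqrt]
      calc min d (s/d) * min d (s/d) ≤ d * (s / d) :=
            Nat.mul_le_mul (min_le_left _ _) (min_le_right _ _)
        _ = s := Nat.mul_div_cancel' hdvd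
    · intro b hb
      calc (Finset.filter (fun d => min d (s / d) = b) s.divisors).card
          ≤ ({b, s / b} : Finset ℕ).card := by
            apply Finset.card_le_card
            intro d hd
            rw [Finset.mem_filter] at hd
            obtain ⟨hdm, hmin⟩ := hd
            rw [Nat.mem_divisors] at hdm
            rcases min_cases d (s/d) with ⟨h, _⟩ | ⟨h, _⟩
            · rw [h] at hmin
              simp [hmin.symm]
            · rw [h] at hmin
              have : d = s / b := by
                rw [← hmin, Nat.div_div_self hdm.1 hdm.2]
              simp [this]
        _ ≤ 2 := Finset.card_insert_le _ _ |>.trans (by simp)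
  calc (s.divisors.card : ℝ) ≤ 2 * (Finset.Icc 1 (Nat.sqrt s)).card := by exact_mod_cast key
    _ ≤ 2 * Real.sqrt s := by
        rw [Nat.card_Icc]
        have h1 : ((Nat.sqrt s + 1 - 1 : ℕ) : ℝ) = (Nat.sqrt s : ℝ) := by norm_num
        rw [h1]
        have h2 : (Nat.sqrt s : ℝ) ≤ Real.sqrt s := by
          have h4 : ((Nat.sqrt s : ℕ)^2 : ℝ) ≤ (s : ℝ) := by
            exact_mod_cast (by simpa [sq] using Nat.sqrt_le' s : Nat.sqrt s ^ 2 ≤ s)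
          calc (Nat.sqrt s : ℝ) = Real.sqrt ((Nat.sqrt s : ℝ)^2) :=
                (Real.sqrt_sq (by positivity)).symm
            _ ≤ Real.sqrt s := by
                apply Real.sqrt_le_sqrt
                exact_mod_cast h4
        linarith

lemma isUnit_int_cast_zmod {q : ℕ} (hq : q ≠ 0) {n : ℤ} (h : Int.gcd n q = 1) :
    IsUnit ((n : ZMod q)) := by
  obtain ⟨a, b, hab⟩ := Int.isCoprime_iff_gcd_eq_one.mpr h
  have : ((a * n + b * q : ℤ) : ZMod q) = 1 := by rw [hab]; norm_num
  push_cast at this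
  rw [ZMod.natCast_self, mul_zero, add_zero] at this
  exact IsUnit.of_mul_eq_one _ (by rw [mul_comm] at this; exact this)

lemma not_isUnit_int_cast_zmod {q : ℕ} {p : ℕ} (hp : p.Prime) (hpq : p ∣ q) {n : ℤ}
    (hpn : (p:ℤ) ∣ n) : ¬ IsUnit ((n : ZMod q)) := by
  intro h
  haveI : Fact (1 < p) := ⟨hp.one_lt⟩
  have h2 : IsUnit ((ZMod.castHom hpq (ZMod p)) ((n : ZMod q))) := h.map _
  rw [map_intCast] at h2
  rw [(ZMod.intCast_zmod_eq_zero_iff_dvd n p).mpr hpn] at h2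
  exact not_isUnit_zero h2

lemma exists_prime_of_not_isUnit {q : ℕ} (hq : q ≠ 0) {n : ℤ}
    (h : ¬ IsUnit ((n : ZMod q))) : ∃ p : ℕ, p.Prime ∧ p ∣ q ∧ (p:ℤ) ∣ n := by
  by_cases hg : Int.gcd n q = 1
  · exact absurd (isUnit_int_cast_zmod hq hg) h
  · obtain ⟨p, hp, hpg⟩ := Nat.exists_prime_and_dvd hg
    refine ⟨p, hp, ?_, ?_⟩
    · have h1 : (Int.gcd n q : ℤ) ∣ (q:ℤ) := Int.gcd_dvd_right _ _
      have h2 : (p:ℤ) ∣ (q:ℤ) := dvd_trans (Int.natCast_dvd_natCast.mpr hpg) h1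
      exact_mod_cast h2
    · exact dvd_trans (Int.natCast_dvd_natCast.mpr hpg) (Int.gcd_dvd_left _ _)

lemma dirichletCharacter_level_two {m : ℕ} (hm : m = 2) (ψ : DirichletCharacter ℂ m) :
    ψ = 1 := by
  subst hm
  ext a
  have : a = 1 := Subsingleton.elim a 1
  simp [this]

lemma primitive_PV {f : ℕ} [NeZero f] (hf : 2 ≤ f) {χ : DirichletCharacter ℂ f}
    (hχ : χ.IsPrimitive) (A B : ℤ) :
    Complex.abs (∑ n ∈ Finset.Ioc A B, χ (n : ZMod f)) ≤ Real.sqrt f * (1 + Real.log f) := by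
  haveI : Fact (1 < f) := ⟨hf⟩
  set τ := gaussSum χ ZMod.stdAddChar with hτ
  set ψ : AddChar (ZMod f) ℂ := ZMod.stdAddChar with hψ
  have hfpos : (0:ℝ) < f := by positivity
  have hinv : ∀ x : ZMod f, χ x = (f:ℂ)⁻¹ * ∑ j : ZMod f, ψ (j * x) * (χ⁻¹ (-j) * τ) := by
    intro x
    have h := congrFun (ZMod.dft.symm_apply_apply (⇑χ)) x
    rw [ZMod.invDFT_apply] at h
    rw [← h, smul_eq_mul]
    congr 1
    refine Finset.sum_congr rfl fun j _ => ?_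
    rw [hχ.fourierTransform_eq_inv_mul_gaussSum j, smul_eq_mul]
  have hS : ∑ n ∈ Finset.Ioc A B, χ ((n : ZMod f))
      = (f:ℂ)⁻¹ * ∑ j : ZMod f, (χ⁻¹ (-j) * τ) * ∑ n ∈ Finset.Ioc A B, (ψ j) ^ n := by
    have h0 : ∑ n ∈ Finset.Ioc A B, χ ((n : ZMod f))
        = ∑ n ∈ Finset.Ioc A B, ((f:ℂ)⁻¹ * ∑ j : ZMod f, ψ (j * (n : ZMod f)) * (χ⁻¹ (-j) * τ)) :=
      Finset.sum_congr rfl fun n _ => hinv _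
    rw [h0, ← Finset.mul_sum]
    congr 1
    rw [Finset.sum_comm]
    refine Finset.sum_congr rfl fun j _ => ?_
    rw [Finset.mul_sum]
    refine Finset.sum_congr rfl fun n _ => ?_
    have hzp : ψ (j * ((n:ℤ) : ZMod f)) = (ψ j) ^ (n:ℤ) := by
      rw [mul_comm, ← zsmul_eq_mul, AddChar.map_zsmul_eq_zpow]
    rw [hzp]; ring
  rw [hS, map_mul]
  have habs : ∀ j : ZMod f, Complex.abs ((χ⁻¹ (-j) * τ) * ∑ n ∈ Finset.Ioc A B, (ψ j) ^ n)
      ≤ if j = 0 then 0 else Real.sqrt f * (1 / Real.sin (π * (j.val) / f)) := by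
    intro j
    by_cases hj : j = 0
    · simp only [hj, if_true]
      have h0 : χ⁻¹ (-(0 : ZMod f)) = 0 := by
        rw [neg_zero]
        exact MulChar.map_nonunit _ (not_isUnit_zero)
      rw [h0, zero_mul, zero_mul, map_zero]
    · simp only [hj, if_false]
      rw [map_mul, map_mul]
      have h1 : Complex.abs (χ⁻¹ (-j)) ≤ 1 := by
        rw [← Complex.norm_eq_abs]
        exact DirichletCharacter.norm_le_one _ _
      have h2 : Complex.abs τ = Real.sqrt f := abs_gaussSum_primitive hχ
      have hval : ((j.val : ℕ) : ZMod f) = j := by rw [ZMod.natCast_val, ZMod.cast_id]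
      have hz1 : ψ j ≠ 1 := by
        intro hcon
        apply hj
        refine ZMod.injective_stdAddChar ?_
        rw [show ZMod.stdAddChar j = ψ j from rfl, hcon, AddChar.map_zero_eq_one]
      have hzabs : Complex.abs (ψ j) = 1 := abs_stdAddChar_eq_one j
      have hgeo := abs_sum_zpow_Ioc (ψ j) hzabs hz1 A B
      have hv1 : 0 < j.val := by
        refine Nat.pos_of_ne_zero fun h => hj ?_
        rw [← hval, h, Nat.cast_zero]
      have hv2 : j.val < f := ZMod.val_lt j
      have hsin : 0 < Real.sin (π * j.val / f) := by
        apply Real.sin_pos_of_pos_of_lt_pi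
        · have h5 : (0:ℝ) < (j.val:ℝ) := by exact_mod_cast hv1
          positivity
        · rw [div_lt_iff₀ hfpos]
          have h6 : (j.val : ℝ) < f := by exact_mod_cast hv2
          nlinarith [Real.pi_pos]
      have hdiff : Complex.abs (ψ j - 1) = 2 * Real.sin (π * j.val / f) := by
        have hval' : ((j.val : ℤ) : ZMod f) = j := by rw [Int.cast_natCast, hval]
        have hj' : ψ j = Complex.exp ((2 * π * j.val / f : ℝ) * I) := by
          rw [hψ, ← hval', ZMod.stdAddChar_coe]
          congr 1
          push_cast
          rw [ZMod.val_cast_of_lt hv2]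
          ring
        rw [hj', abs_exp_I_sub_one,
          show (2 * π * (j.val:ℝ) / f) / 2 = π * j.val / f by ring,
          abs_of_pos hsin]
      have hgeo2 : Complex.abs (∑ n ∈ Finset.Ioc A B, ψ j ^ n)
          ≤ 2 / (2 * Real.sin (π * j.val / f)) := by rw [← hdiff]; exact hgeo
      calc Complex.abs (χ⁻¹ (-j)) * Complex.abs τ
            * Complex.abs (∑ n ∈ Finset.Ioc A B, (ψ j) ^ n)
          ≤ (1 * Complex.abs τ) * (2 / (2 * Real.sin (π * j.val / f))) := by
            refine mul_le_mul (mul_le_mul h1 le_rfl (Complex.abs.nonneg τ) zero_le_one)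
              hgeo2 (Complex.abs.nonneg _) ?_
            rw [one_mul]; exact Complex.abs.nonneg τ
        _ = Real.sqrt f * (1 / Real.sin (π * j.val / f)) := by
            rw [one_mul, h2]
            congr 1
            rw [div_eq_div_iff (by positivity) hsin.ne']
            ring
  have hite : ∑ j : ZMod f, (if j = 0 then 0
        else Real.sqrt f * (1 / Real.sin (π * (j.val) / f)))
      = Real.sqrt f * ∑ m ∈ Finset.Ioo 0 f, 1 / Real.sin (π * m / f) := by
    rw [← Finset.sum_erase_add Finset.univ _ (Finset.mem_univ (0 : ZMod f))]
    rw [if_pos rfl, add_zero]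
    rw [Finset.mul_sum]
    refine Finset.sum_nbij' (fun j => j.val) (fun m => ((m : ℕ) : ZMod f)) ?_ ?_ ?_ ?_ ?_
    · intro j hjm
      have hj : j ≠ 0 := Finset.ne_of_mem_erase hjm
      simp only [Finset.mem_Ioo]
      constructor
      · refine Nat.pos_of_ne_zero fun h => hj ?_
        rw [← (show ((j.val : ℕ) : ZMod f) = j by rw [ZMod.natCast_val, ZMod.cast_id]), h,
          Nat.cast_zero]
      · exact ZMod.val_lt j
    · intro m hm
      simp only [Finset.mem_Ioo] at hm
      refine Finset.mem_erase.mpr ⟨?_, Finset.mem_univ _⟩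
      intro h
      rw [ZMod.natCast_eq_zero_iff] at h
      exact absurd (Nat.le_of_dvd hm.1 h) (by omega)
    · intro j hjm
      show ((j.val : ℕ) : ZMod f) = j
      rw [ZMod.natCast_val, ZMod.cast_id]
    · intro m hm
      simp only [Finset.mem_Ioo] at hm
      show (((m : ℕ) : ZMod f)).val = m
      exact ZMod.val_cast_of_lt hm.2
    · intro j hjm
      have hj : j ≠ 0 := Finset.ne_of_mem_erase hjm
      rw [if_neg hj]
  calc Complex.abs ((f:ℂ)⁻¹)
        * Complex.abs (∑ j : ZMod f, (χ⁻¹ (-j) * τ) * ∑ n ∈ Finset.Ioc A B, (ψ j) ^ n)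
      ≤ (f:ℝ)⁻¹ * (Real.sqrt f * ∑ m ∈ Finset.Ioo 0 f, 1 / Real.sin (π * m / f)) := by
        rw [← hite]
        have e1 : Complex.abs ((f:ℂ)⁻¹) = (f:ℝ)⁻¹ := by
          rw [map_inv₀, Complex.abs_natCast]
        rw [e1]
        refine mul_le_mul le_rfl ((Complex.abs.sum_le _ _).trans
          (Finset.sum_le_sum fun j _ => habs j)) (Complex.abs.nonneg _) (by positivity)
    _ ≤ (f:ℝ)⁻¹ * (Real.sqrt f * (f * (1 + Real.log f))) := by
        have h7 := inv_sin_sum f hf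
        gcongr
    _ = Real.sqrt f * (1 + Real.log f) := by
        field_simp

lemma aux_reduction (q : ℕ) (hq : 2 ≤ q) (f : ℕ) (hfq : f ∣ q) (hf3 : 3 ≤ f)
    (χ : DirichletCharacter ℂ q) (χ' : DirichletCharacter ℂ f) (hprim : χ'.IsPrimitive)
    (hchange : χ = DirichletCharacter.changeLevel hfq χ') (M B : ℤ) :
    Complex.abs (∑ n ∈ Finset.Ioc M B, χ (n : ZMod q))
      ≤ 6 * Real.sqrt q * Real.log q := by
  haveI : NeZero q := ⟨by omega⟩
  haveI : NeZero f := ⟨by omega⟩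
  classical
  set S : Finset ℕ := q.primeFactors.filter (fun p => ¬ p ∣ f) with hS
  set s : ℕ := ∏ p ∈ S, p with hs
  have hq0 : q ≠ 0 := by omega
  have hsprime : ∀ p ∈ S, p.Prime := fun p hp =>
    Nat.prime_of_mem_primeFactors (Finset.mem_filter.mp hp).1
  have hs0 : 0 < s := Finset.prod_pos fun p hp => (hsprime p hp).pos
  have hsq : s ∣ q := by
    refine dvd_trans ?_ (Nat.prod_primeFactors_dvd q)
    exact Finset.prod_dvd_prod_of_subset _ _ _ (Finset.filter_subset _ _)
  have hcop : Nat.Coprime f s := by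
    refine Nat.Coprime.prod_right fun p hp => ?_
    have h1 : ¬ p ∣ f := (Finset.mem_filter.mp hp).2
    exact (Nat.Prime.coprime_iff_not_dvd (hsprime p hp)).mpr h1 |>.symm
  have hfs : f * s ∣ q := Nat.Coprime.mul_dvd_of_dvd_of_dvd hcop hfq hsq
  -- prime not dividing s divides f
  have hpf : ∀ p : ℕ, p.Prime → p ∣ q → ¬ p ∣ s → p ∣ f := by
    intro p hp hpq hps
    by_contra hnf
    exact hps (Finset.dvd_prod_of_mem _ (Finset.mem_filter.mpr
      ⟨Nat.mem_primeFactors.mpr ⟨hp, hpq, hq0⟩, hnf⟩))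
  -- pointwise decomposition
  have hpoint : ∀ n : ℤ, χ ((n : ZMod q))
      = (∑ d ∈ s.divisors.filter (fun d : ℕ => (d:ℤ) ∣ n),
          ((ArithmeticFunction.moebius d : ℤ) : ℂ)) * χ' ((n : ZMod f)) := by
    intro n
    have hfilt : s.divisors.filter (fun d : ℕ => (d:ℤ) ∣ n) = (Int.gcd n s).divisors := by
      ext d
      simp only [Finset.mem_filter, Nat.mem_divisors]
      constructor
      · rintro ⟨⟨hds, -⟩, hdn⟩
        refine ⟨Nat.dvd_gcd ?_ ?_, ?_⟩
        · rw [← Int.natAbs_dvd_natAbs] at hdn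
          simpa using hdn
        · simpa using hds
        · intro h
          rw [Int.gcd_eq_zero_iff] at h
          exact (by exact_mod_cast hs0.ne' : (s:ℤ) ≠ 0) h.2
      · rintro ⟨hd, hg⟩
        have h1 : d ∣ n.natAbs := hd.trans (Nat.gcd_dvd_left _ _)
        have h2 : d ∣ s := by
          have := hd.trans (Nat.gcd_dvd_right n.natAbs ((s:ℤ)).natAbs)
          simpa using this
        refine ⟨⟨h2, hs0.ne'⟩, ?_⟩
        rw [← Int.natAbs_dvd_natAbs]
        simpa using h1
    rw [hfilt]
    have hsum : (∑ d ∈ (Int.gcd n s).divisors, ((ArithmeticFunction.moebius d : ℤ) : ℂ))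
        = if Int.gcd n s = 1 then 1 else 0 := by
      rw [← Int.cast_sum, sum_moebius_divisors]
      split_ifs <;> norm_num
    rw [hsum]
    by_cases hg : Int.gcd n s = 1
    · rw [if_pos hg, one_mul]
      by_cases hu : IsUnit ((n : ZMod q))
      · obtain ⟨u, hu'⟩ := hu
        rw [hchange, ← hu', DirichletCharacter.changeLevel_eq_cast_of_dvd]
        congr 1
        rw [hu']
        rw [← ZMod.castHom_apply (h := hfq), map_intCast]
      · obtain ⟨p, hp, hpq2, hpn⟩ := exists_prime_of_not_isUnit hq0 hu
        have hpfdvd : p ∣ f := by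
          apply hpf p hp hpq2
          intro hps
          have : p ∣ Int.gcd n s := Nat.dvd_gcd (by rwa [← Int.natAbs_dvd_natAbs] at hpn; ) (by simpa using hps)
          rw [hg] at this
          exact hp.ne_one (Nat.dvd_one.mp this)
        rw [MulChar.map_nonunit χ hu,
          MulChar.map_nonunit χ' (not_isUnit_int_cast_zmod hp hpfdvd hpn)]
    · rw [if_neg hg, zero_mul]
      obtain ⟨p, hp, hpg⟩ := Nat.exists_prime_and_dvd hg
      have hpn : (p:ℤ) ∣ n := by
        have h1 : (p:ℤ) ∣ (Int.gcd n s : ℤ) := Int.natCast_dvd_natCast.mpr hpg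
        exact h1.trans (Int.gcd_dvd_left _ _)
      have hpq2 : p ∣ q := by
        have h2 : p ∣ s := by
          have h1 : (p:ℤ) ∣ (Int.gcd n s : ℤ) := Int.natCast_dvd_natCast.mpr hpg
          have := h1.trans (Int.gcd_dvd_right _ _)
          exact_mod_cast this
        exact h2.trans hsq
      exact MulChar.map_nonunit χ (not_isUnit_int_cast_zmod hp hpq2 hpn)
  -- swap sums
  have hswap : ∑ n ∈ Finset.Ioc M B, χ ((n : ZMod q))
      = ∑ d ∈ s.divisors, ((ArithmeticFunction.moebius d : ℤ) : ℂ)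
          * ((χ' ((d : ZMod f))) * ∑ m ∈ Finset.Ioc (M / d) (B / d), χ' ((m : ZMod f))) := by
    rw [Finset.sum_congr rfl fun n _ => hpoint n]
    have step1 : ∑ n ∈ Finset.Ioc M B,
        (∑ d ∈ s.divisors.filter (fun d : ℕ => (d:ℤ) ∣ n),
          ((ArithmeticFunction.moebius d : ℤ) : ℂ)) * χ' ((n : ZMod f))
      = ∑ d ∈ s.divisors, ((ArithmeticFunction.moebius d : ℤ) : ℂ)
          * ∑ n ∈ (Finset.Ioc M B).filter (fun n => (d:ℤ) ∣ n), χ' ((n : ZMod f)) := by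
      simp_rw [Finset.sum_filter, Finset.sum_mul, Finset.mul_sum]
      rw [Finset.sum_comm]
      refine Finset.sum_congr rfl fun d _ => Finset.sum_congr rfl fun n _ => ?_
      split_ifs <;> ring
    rw [step1]
    refine Finset.sum_congr rfl fun d hd => ?_
    congr 1
    -- inner reindex
    have hd1 : 0 < d := Nat.pos_of_mem_divisors hd
    have hdz : (0:ℤ) < (d:ℤ) := by exact_mod_cast hd1
    rw [Finset.mul_sum]
    refine Finset.sum_nbij' (fun n => n / (d:ℤ)) (fun m => (d:ℤ) * m) ?_ ?_ ?_ ?_ ?_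
    · intro n hn
      simp only [Finset.mem_filter, Finset.mem_Ioc] at hn
      obtain ⟨⟨h1, h2⟩, h3⟩ := hn
      simp only [Finset.mem_Ioc]
      constructor
      · rw [Int.ediv_lt_iff_lt_mul hdz]
        calc M < n := h1
          _ = n / d * d := (Int.ediv_mul_cancel h3).symm
      · exact Int.ediv_le_ediv hdz h2
    · intro m hm
      simp only [Finset.mem_Ioc] at hm
      simp only [Finset.mem_filter, Finset.mem_Ioc]
      refine ⟨⟨?_, ?_⟩, Dvd.intro m rfl⟩
      · have := (Int.ediv_lt_iff_lt_mul hdz).mp hm.1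
        linarith [this]
      · have := (Int.le_ediv_iff_mul_le hdz).mp hm.2
        linarith [this]
    · intro n hn
      simp only [Finset.mem_filter] at hn
      exact Int.mul_ediv_cancel' hn.2
    · intro m hm
      exact Int.mul_ediv_cancel_left m hdz.ne'
    · intro n hn
      simp only [Finset.mem_filter] at hn
      obtain ⟨-, h3⟩ := hn
      conv_lhs => rw [← Int.mul_ediv_cancel' h3]
      push_cast
      rw [map_mul]
  rw [hswap]
  -- bound
  have hf2 : (2:ℕ) ≤ f := by omega
  haveI : NeZero f := ⟨by omega⟩
  have hbound : ∀ d ∈ s.divisors,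
      Complex.abs (((ArithmeticFunction.moebius d : ℤ) : ℂ)
        * ((χ' ((d : ZMod f))) * ∑ m ∈ Finset.Ioc (M / d) (B / d), χ' ((m : ZMod f))))
      ≤ Real.sqrt f * (1 + Real.log f) := by
    intro d hd
    rw [map_mul, map_mul]
    have h1 : Complex.abs ((ArithmeticFunction.moebius d : ℤ) : ℂ) ≤ 1 := by
      rw [Complex.abs_intCast]
      exact_mod_cast abs_moebius_le_one d
    have h2 : Complex.abs (χ' ((d : ZMod f))) ≤ 1 := by
      rw [← Complex.norm_eq_abs]
      exact DirichletCharacter.norm_le_one _ _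
    have h3 := primitive_PV hf2 hprim (M / d) (B / d)
    have hnn : (0:ℝ) ≤ Real.sqrt f * (1 + Real.log f) := by
      have : (0:ℝ) ≤ Real.log f := Real.log_nonneg (by
        have : (1:ℝ) ≤ (f:ℝ) := by exact_mod_cast (by omega : 1 ≤ f)
        exact this)
      positivity
    calc Complex.abs ((ArithmeticFunction.moebius d : ℤ) : ℂ) * (Complex.abs (χ' ((d : ZMod f)))
          * Complex.abs (∑ m ∈ Finset.Ioc (M / d) (B / d), χ' ((m : ZMod f))))
        ≤ 1 * (1 * (Real.sqrt f * (1 + Real.log f))) := by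
          refine mul_le_mul h1 (mul_le_mul h2 h3 (Complex.abs.nonneg _) zero_le_one)
            (by positivity) zero_le_one
      _ = Real.sqrt f * (1 + Real.log f) := by ring
  have hcard := card_divisors_le_two_sqrt s hs0
  have hlogf1 : (1:ℝ) ≤ Real.log f := by
    rw [Real.le_log_iff_exp_le (by positivity)]
    calc Real.exp 1 ≤ 3 := by
          have := Real.exp_one_lt_d9
          linarith
      _ ≤ (f:ℝ) := by exact_mod_cast hf3
  have hlogq : Real.log f ≤ Real.log q := by
    apply Real.log_le_log (by positivity)
    exact_mod_cast Nat.le_of_dvd (by omega) hfq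
  have hlogq0 : (0:ℝ) ≤ Real.log q := le_trans (by linarith) hlogq
  have hsfq : Real.sqrt s * Real.sqrt f ≤ Real.sqrt q := by
    rw [← Real.sqrt_mul (by positivity)]
    apply Real.sqrt_le_sqrt
    have : s * f ≤ q := by
      apply Nat.le_of_dvd (by omega)
      rwa [mul_comm] at hfs
    exact_mod_cast this
  calc Complex.abs (∑ d ∈ s.divisors, ((ArithmeticFunction.moebius d : ℤ) : ℂ)
          * ((χ' ((d : ZMod f))) * ∑ m ∈ Finset.Ioc (M / d) (B / d), χ' ((m : ZMod f))))
      ≤ ∑ d ∈ s.divisors, Complex.abs (((ArithmeticFunction.moebius d : ℤ) : ℂ)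
          * ((χ' ((d : ZMod f))) * ∑ m ∈ Finset.Ioc (M / d) (B / d), χ' ((m : ZMod f)))) :=
        Complex.abs.sum_le _ _
    _ ≤ ∑ _d ∈ s.divisors, Real.sqrt f * (1 + Real.log f) := Finset.sum_le_sum hbound
    _ = (s.divisors.card : ℝ) * (Real.sqrt f * (1 + Real.log f)) := by
        rw [Finset.sum_const, nsmul_eq_mul]
    _ ≤ (2 * Real.sqrt s) * (Real.sqrt f * (2 * Real.log f)) := by
        apply mul_le_mul hcard _ _ (by positivity)
        · apply mul_le_mul le_rfl (by linarith) (by linarith) (Real.sqrt_nonneg _)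
        · have : (0:ℝ) ≤ Real.sqrt f * (1 + Real.log f) := by positivity
          exact this
    _ = 4 * (Real.sqrt s * Real.sqrt f) * Real.log f := by ring
    _ ≤ 4 * Real.sqrt q * Real.log q := by
        apply mul_le_mul _ hlogq (by linarith) (by positivity)
        apply mul_le_mul le_rfl hsfq (by positivity) (by norm_num)
    _ ≤ 6 * Real.sqrt q * Real.log q := by
        have h6 : (0:ℝ) ≤ Real.sqrt q := Real.sqrt_nonneg _
        nlinarith

theorem polya_vinogradov (q : ℕ) (hq : 2 ≤ q) (χ : DirichletCharacter ℂ q)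
    (hχ : χ ≠ 1) (M : ℤ) (N : ℕ) (hN : 1 ≤ N) :
    ‖∑ n ∈ Finset.Ioc M (M + N), χ (n : ZMod q)‖
      ≤ 6 * Real.sqrt q * Real.log q := by
  haveI : NeZero q := ⟨by omega⟩
  have hq0 : q ≠ 0 := by omega
  have hchange : χ = DirichletCharacter.changeLevel
      (DirichletCharacter.conductor_dvd_level χ) χ.primitiveCharacter := by
    exact Classical.choose_spec (χ.factorsThrough_conductor).choose_spec
  have hf0 : χ.conductor ≠ 0 := DirichletCharacter.conductor_ne_zero χ
  have hf1 : χ.conductor ≠ 1 := fun h =>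
    hχ ((DirichletCharacter.eq_one_iff_conductor_eq_one).mpr h)
  have hf2 : χ.conductor ≠ 2 := by
    intro h
    apply hχ
    rw [hchange, dirichletCharacter_level_two h χ.primitiveCharacter, map_one]
  exact aux_reduction q hq χ.conductor (DirichletCharacter.conductor_dvd_level χ)
    (by omega) χ χ.primitiveCharacter χ.primitiveCharacter_isPrimitive hchange M (M + N)
end

section
/- (Divisor-counting bound for the minor arcs) Let q ≥ 1 and x ≥ 2. Then the number of pairs (r₁, r₂) with -x < r₁, r₂ < x, r₁ r₂ ≠ 0, and q | r₁ r₂ is ≪ d(q) · x²/q + d(q) · x, where d(q) is the number of divisors of q. -/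
open Finset

lemma count_mult_le (m : ℕ) (hm : 1 ≤ m) (x : ℝ) (hx : 2 ≤ x) :
    (((Finset.Ioo (⌊-x⌋ : ℤ) ⌈x⌉).filter (fun r : ℤ => (m:ℤ) ∣ r)).card : ℝ)
      ≤ 2 * x / m + 1 := by
  have hm0 : (0:ℝ) < m := by exact_mod_cast hm
  have hx0 : (0:ℝ) < x := by linarith
  set K : ℤ := ⌊x / m⌋ with hK
  have hK0 : (0:ℤ) ≤ K := Int.floor_nonneg.mpr (by positivity)
  have hmz : (m:ℤ) ≠ 0 := by positivity
  have hcard : ((Finset.Ioo (⌊-x⌋ : ℤ) ⌈x⌉).filter (fun r : ℤ => (m:ℤ) ∣ r)).card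
      ≤ (Finset.Icc (-K) K).card := by
    apply Finset.card_le_card_of_injOn (fun r => r / (m:ℤ))
    · intro r hr
      simp only [Finset.coe_filter, Set.mem_setOf_eq, Finset.mem_coe, Finset.mem_filter, Finset.mem_Ioo] at hr
      obtain ⟨⟨h1, h2⟩, k, rfl⟩ := hr
      have hr1 : -x < (((m:ℤ) * k : ℤ) : ℝ) := Int.floor_lt.mp h1
      have hr2 : (((m:ℤ) * k : ℤ) : ℝ) < x := Int.lt_ceil.mp h2
      push_cast at hr1 hr2
      show (↑m * k) / (m:ℤ) ∈ (Finset.Icc (-K) K : Set ℤ)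
      rw [Int.mul_ediv_cancel_left _ hmz, Finset.mem_coe, Finset.mem_Icc]
      constructor
      · rw [neg_le, hK]
        apply Int.le_floor.mpr
        push_cast
        rw [le_div_iff₀ hm0]
        nlinarith
      · apply Int.le_floor.mpr
        push_cast
        rw [le_div_iff₀ hm0]
        nlinarith
    · intro r hr r' hr' h
      simp only [Finset.mem_coe, Finset.mem_filter] at hr hr'
      obtain ⟨-, k, rfl⟩ := hr
      obtain ⟨-, k', rfl⟩ := hr'
      simp only [Int.mul_ediv_cancel_left _ hmz] at h
      rw [h]
  have hKx : (K:ℝ) ≤ x / m := Int.floor_le _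
  calc (((Finset.Ioo (⌊-x⌋ : ℤ) ⌈x⌉).filter (fun r : ℤ => (m:ℤ) ∣ r)).card : ℝ)
      ≤ ((Finset.Icc (-K) K).card : ℝ) := by exact_mod_cast hcard
    _ = ((K + 1 - (-K)).toNat : ℝ) := by rw [Int.card_Icc]
    _ = ((2*K + 1 : ℤ) : ℝ) := by
        have h : K + 1 - -K = 2*K + 1 := by ring
        rw [h]
        exact_mod_cast congrArg (fun z : ℤ => (z : ℝ)) (Int.toNat_of_nonneg (show (0:ℤ) ≤ 2*K+1 by omega))
    _ ≤ 2 * (x / m) + 1 := by push_cast; linarith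
    _ = 2 * x / m + 1 := by ring

theorem divisor_pair_count_bound :
    ∃ C : ℝ, 0 < C ∧ ∀ q : ℕ, 1 ≤ q → ∀ x : ℝ, 2 ≤ x →
      ((((Finset.Ioo (⌊-x⌋ : ℤ) ⌈x⌉) ×ˢ (Finset.Ioo (⌊-x⌋ : ℤ) ⌈x⌉)).filter
          (fun rr : ℤ × ℤ => rr.1 * rr.2 ≠ 0 ∧ (q : ℤ) ∣ rr.1 * rr.2)).card : ℝ)
        ≤ C * ((q.divisors.card : ℝ) * x ^ 2 / q + (q.divisors.card : ℝ) * x) := by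
  refine ⟨5, by norm_num, ?_⟩
  intro q hq x hx
  have hq0 : (0:ℝ) < q := by exact_mod_cast hq
  have hx0 : (0:ℝ) < x := by linarith
  set I := Finset.Ioo (⌊-x⌋ : ℤ) ⌈x⌉ with hI
  set A : ℕ → Finset ℤ := fun m => I.filter (fun r : ℤ => (m:ℤ) ∣ r) with hA
  have hsub : ((I ×ˢ I).filter
      (fun rr : ℤ × ℤ => rr.1 * rr.2 ≠ 0 ∧ (q : ℤ) ∣ rr.1 * rr.2))
      ⊆ q.divisors.biUnion (fun d => (A d) ×ˢ (A (q / d))) := by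
    intro rr hrr
    simp only [Finset.mem_filter, Finset.mem_product] at hrr
    obtain ⟨⟨h1, h2⟩, hne, hdvd⟩ := hrr
    set d := Int.gcd (q:ℤ) rr.1 with hd
    have hdpos : 0 < d := by
      rw [hd, Int.gcd_pos_iff]
      exact Or.inl (Int.natCast_ne_zero.mpr (by omega))
    have hddq : (d:ℤ) ∣ (q:ℤ) := Int.gcd_dvd_left _ _
    have hddr : (d:ℤ) ∣ rr.1 := Int.gcd_dvd_right _ _
    have hdq : d ∣ q := by exact_mod_cast hddq
    rw [Finset.mem_biUnion]
    refine ⟨d, Nat.mem_divisors.mpr ⟨hdq, by omega⟩, ?_⟩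
    rw [Finset.mem_product]
    constructor
    · simp only [hA, Finset.mem_filter]
      exact ⟨h1, hddr⟩
    · simp only [hA, Finset.mem_filter]
      refine ⟨h2, ?_⟩
      -- show ((q/d : ℕ) : ℤ) ∣ rr.2
      have hdz : (d:ℤ) ≠ 0 := by exact_mod_cast hdpos.ne'
      have hqd : ((q / d : ℕ) : ℤ) = (q:ℤ) / (d:ℤ) := by
        push_cast [Int.natCast_div]
        rfl
      rw [hqd]
      have hcop : Int.gcd ((q:ℤ) / d) (rr.1 / d) = 1 :=
        Int.gcd_div_gcd_div_gcd (by exact_mod_cast hdpos)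
      have hdvd2 : (q:ℤ) / d ∣ (rr.1 / d) * rr.2 := by
        have : (d:ℤ) * ((q:ℤ)/d) ∣ (d:ℤ) * ((rr.1/d) * rr.2) := by
          rw [Int.mul_ediv_cancel' hddq, ← mul_assoc, Int.mul_ediv_cancel' hddr]
          exact hdvd
        exact (mul_dvd_mul_iff_left hdz).mp this
      exact Int.dvd_of_dvd_mul_right_of_gcd_one hdvd2 hcop
  have hcs : ((((I ×ˢ I).filter
      (fun rr : ℤ × ℤ => rr.1 * rr.2 ≠ 0 ∧ (q : ℤ) ∣ rr.1 * rr.2)).card : ℝ))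
      ≤ ∑ d ∈ q.divisors, ((A d).card : ℝ) * ((A (q/d)).card : ℝ) := by
    have h1 := Finset.card_le_card hsub
    have h2 := Finset.card_biUnion_le (s := q.divisors)
      (t := fun d => (A d) ×ˢ (A (q / d)))
    have h3 : (((I ×ˢ I).filter
      (fun rr : ℤ × ℤ => rr.1 * rr.2 ≠ 0 ∧ (q : ℤ) ∣ rr.1 * rr.2)).card : ℕ)
      ≤ ∑ d ∈ q.divisors, (A d).card * (A (q/d)).card := by
      refine le_trans (le_trans h1 h2) (le_of_eq ?_)
      exact Finset.sum_congr rfl (fun d _ => Finset.card_product _ _)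
    exact_mod_cast h3
  refine le_trans hcs ?_
  have hterm : ∀ d ∈ q.divisors, ((A d).card : ℝ) * ((A (q/d)).card : ℝ)
      ≤ 4 * x^2 / q + 5 * x := by
    intro d hd
    obtain ⟨hdq, hqne⟩ := Nat.mem_divisors.mp hd
    have hd1 : 1 ≤ d := Nat.pos_of_mem_divisors hd
    have hd1' : 1 ≤ q / d := Nat.one_le_div_iff (by omega) |>.mpr (Nat.le_of_dvd (by omega) hdq)
    have hdm : (d : ℝ) * ((q/d : ℕ) : ℝ) = (q : ℝ) := by
      rw [← Nat.cast_mul, Nat.mul_div_cancel' hdq]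
    have b1 := count_mult_le d hd1 x hx
    have b2 := count_mult_le (q/d) hd1' x hx
    have hd0 : (0:ℝ) < d := by exact_mod_cast hd1
    have hd0' : (0:ℝ) < ((q/d : ℕ) : ℝ) := by exact_mod_cast hd1'
    have hA1 : (0:ℝ) ≤ ((A d).card : ℝ) := by positivity
    have hA2 : (0:ℝ) ≤ ((A (q/d)).card : ℝ) := by positivity
    have huv : (2 * x / (d:ℝ)) * (2 * x / ((q/d : ℕ) : ℝ)) = 4 * x^2 / q := by
      rw [div_mul_div_comm, hdm]; ring
    have hu : 2 * x / (d:ℝ) ≤ 2 * x := by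
      rw [div_le_iff₀ hd0]
      nlinarith [hx0, (show (1:ℝ) ≤ (d:ℝ) by exact_mod_cast hd1)]
    have hv : 2 * x / ((q/d : ℕ) : ℝ) ≤ 2 * x := by
      rw [div_le_iff₀ hd0']
      nlinarith [hx0, (show (1:ℝ) ≤ ((q/d : ℕ):ℝ) by exact_mod_cast hd1')]
    have hu0 : 0 ≤ 2 * x / (d:ℝ) := by positivity
    have hv0 : 0 ≤ 2 * x / ((q/d : ℕ) : ℝ) := by positivity
    calc ((A d).card : ℝ) * ((A (q/d)).card : ℝ)
        ≤ (2 * x / (d:ℝ) + 1) * (2 * x / ((q/d : ℕ) : ℝ) + 1) := by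
          apply mul_le_mul b1 b2 hA2 (by linarith)
      _ = (2 * x / (d:ℝ)) * (2 * x / ((q/d : ℕ) : ℝ))
            + (2 * x / (d:ℝ)) + (2 * x / ((q/d : ℕ) : ℝ)) + 1 := by ring
      _ ≤ 4 * x^2 / q + 2*x + 2*x + x := by rw [huv]; linarith
      _ = 4 * x^2 / q + 5 * x := by ring
  calc ∑ d ∈ q.divisors, ((A d).card : ℝ) * ((A (q/d)).card : ℝ)
      ≤ ∑ _d ∈ q.divisors, (4 * x^2 / q + 5 * x) := Finset.sum_le_sum hterm
    _ = (q.divisors.card : ℝ) * (4 * x^2 / q + 5 * x) := by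
        rw [Finset.sum_const, nsmul_eq_mul]
    _ ≤ 5 * ((q.divisors.card : ℝ) * x ^ 2 / q + (q.divisors.card : ℝ) * x) := by
        have h0 : (0:ℝ) ≤ (q.divisors.card : ℝ) * x^2 / q := by positivity
        ring_nf
        ring_nf at h0
        nlinarith [h0]
end
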